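/- arXiv:1908.00032 — 2 statements merged into one kernel-verified Lean document; each statement's English description precedes it below -/
import Mathlib

section
/- Assume in addition that v_1,…,v_n are pairwise distinct, and let w_{n+1} ∈ ℂ be distinct from all v_i and all u_k. Set (w_1,…,w_n) := (v_1,…,v_n) and define the (n+1)×(n+1) matrix W by W_{jℓ} := g(u_ℓ,w_j) · (∏_{i≠ℓ} g(u_ℓ,u_i)) / (∏_{m=1}^{n+1} g(u_ℓ,w_m)). Then the last row of W·M vanishes, i.e. (W·M)_{(n+1)k} = 0 for all k = 1, …, n+1, and for every j = 1, …, n and k = 1, …, n+1 one has (W·M)_{jk} = (∏_{i≠k} g(u_k,u_i)) · Ω_{jk} / g(w_{n+1},v_j). -/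
/-- `g c x y = c / (x - y)`. -/
noncomputable def g (c x y : ℂ) : ℂ := c / (x - y)

/-- `esym w p` is the `p`-th elementary symmetric polynomial of the entries of `w`;
it equals `1` for `p = 0` and `0` for `p` larger than the number of entries. -/
noncomputable def esym {m : ℕ} (w : Fin m → ℂ) (p : ℕ) : ℂ :=
  ∑ s ∈ Finset.powersetCard p Finset.univ, ∏ i ∈ s, w i

/-- `Y a w = ∑_{p=0}^{n} a p * σ_p(w)`. -/
noncomputable def Y {n : ℕ} (a : Fin (n + 1) → ℂ) (w : Fin n → ℂ) : ℂ :=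
  ∑ p : Fin (n + 1), a p * esym w (p : ℕ)

/-- The matrix `M_{jk} = (∏_{i≠k} g(u_k,u_i)) Y_k(û_j) - δ_{jk} (∏_i g(u_j,v_i)) Y_j(v)`. -/
noncomputable def Mmat (c : ℂ) {n : ℕ} (u : Fin (n + 1) → ℂ) (v : Fin n → ℂ)
    (a : Fin (n + 1) → Fin (n + 1) → ℂ) : Matrix (Fin (n + 1)) (Fin (n + 1)) ℂ :=
  Matrix.of fun j k =>
    (∏ i ∈ Finset.univ.erase k, g c (u k) (u i)) * Y (fun p => a p k) (u ∘ j.succAbove)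
      - (if j = k then 1 else 0) * ((∏ i, g c (u j) (v i)) * Y (fun p => a p j) v)

/-- The `n × (n+1)` matrix `Ω_{jk} = g(u_k, v_j) * Y_k(v^{(j → u_k)})`. -/
noncomputable def Om (c : ℂ) {n : ℕ} (u : Fin (n + 1) → ℂ) (v : Fin n → ℂ)
    (a : Fin (n + 1) → Fin (n + 1) → ℂ) : Matrix (Fin n) (Fin (n + 1)) ℂ :=
  Matrix.of fun j k =>
    g c (u k) (v j) * Y (fun p => a p k) (Function.update v j (u k))

/-- `Ω̂_ℓ` : the determinant of the `n × n` matrix obtained from `Ω` by deleting column `ℓ`. -/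
noncomputable def OmHat (c : ℂ) {n : ℕ} (u : Fin (n + 1) → ℂ) (v : Fin n → ℂ)
    (a : Fin (n + 1) → Fin (n + 1) → ℂ) (ℓ : Fin (n + 1)) : ℂ :=
  ((Om c u v a).submatrix id ℓ.succAbove).det

/-- `Δ(û_ℓ) = ∏_{j > k, j ≠ ℓ, k ≠ ℓ} g(u_j, u_k)`. -/
noncomputable def DelHat (c : ℂ) {n : ℕ} (u : Fin (n + 1) → ℂ) (ℓ : Fin (n + 1)) : ℂ :=
  ∏ p ∈ Finset.univ.filter
      (fun p : Fin (n + 1) × Fin (n + 1) => p.2 < p.1 ∧ p.1 ≠ ℓ ∧ p.2 ≠ ℓ),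
    g c (u p.1) (u p.2)

open Finset Polynomial

noncomputable def Esig {ι : Type*} [DecidableEq ι] (s : Finset ι) (f : ι → ℂ) (p : ℕ) : ℂ :=
  ∑ t ∈ Finset.powersetCard p s, ∏ i ∈ t, f i

lemma Esig_map {ι κ : Type*} [DecidableEq ι] [DecidableEq κ] (s : Finset ι) (f : ι ↪ κ)
    (h : κ → ℂ) (p : ℕ) : Esig (s.map f) h p = Esig s (h ∘ f) p := by
  unfold Esig
  rw [Finset.powersetCard_map, Finset.sum_map]
  refine Finset.sum_congr rfl fun t ht => ?_
  rw [RelEmbedding.coe_toEmbedding, Finset.mapEmbedding_apply, Finset.prod_map]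
  rfl

lemma esym_eq_Esig {m : ℕ} (w : Fin m → ℂ) (p : ℕ) : esym w p = Esig Finset.univ w p := rfl

lemma coeff_prod_X_sub_C {ι : Type*} [DecidableEq ι] (s : Finset ι) (f : ι → ℂ) {p : ℕ}
    (hp : p ≤ s.card) :
    (∏ i ∈ s, (X - C (f i))).coeff (s.card - p) = (-1) ^ p * Esig s f p := by
  have h : s.card - p ≤ s.card := Nat.sub_le _ _
  have h2 := Finset.prod_X_add_C_coeff s (fun i => -f i) h
  simp only [map_neg, ← sub_eq_add_neg] at h2
  rw [h2, Nat.sub_sub_self hp]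
  unfold Esig
  rw [Finset.mul_sum]
  refine Finset.sum_congr rfl fun t ht => ?_
  have ht' := (Finset.mem_powersetCard.mp ht).2
  calc (∏ i ∈ t, -f i) = ∏ i ∈ t, (-1) * f i := by simp
    _ = (-1 : ℂ) ^ p * ∏ i ∈ t, f i := by
        rw [Finset.prod_mul_distrib, Finset.prod_const, ht']

lemma map_succAboveEmb_univ {n : ℕ} (ℓ : Fin (n + 1)) :
    Finset.univ.map ℓ.succAboveEmb = Finset.univ.erase ℓ := by
  rw [Finset.map_eq_image, ← Finset.compl_singleton, ← Fin.image_succAbove_univ]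
  rfl

lemma esym_comp_succAbove {n : ℕ} (f : Fin (n + 1) → ℂ) (ℓ : Fin (n + 1)) (p : ℕ) :
    esym (f ∘ ℓ.succAbove) p = Esig (Finset.univ.erase ℓ) f p := by
  rw [esym_eq_Esig, ← map_succAboveEmb_univ ℓ, Esig_map]
  rfl

lemma master {n : ℕ} (u : Fin (n + 1) → ℂ) (hu : Function.Injective u) (z : Fin n → ℂ)
    {p : ℕ} (hp : p ≤ n) :
    ∑ ℓ : Fin (n + 1),
        (∏ m, (u ℓ - z m)) / (∏ i ∈ Finset.univ.erase ℓ, (u ℓ - u i))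
          * Esig (Finset.univ.erase ℓ) u p
      = Esig Finset.univ z p := by
  classical
  set f : Polynomial ℂ := ∏ m : Fin n, (X - C (z m)) with hf
  have hdeg : f.degree < ((Finset.univ : Finset (Fin (n + 1))).card : WithBot ℕ) := by
    have hd : f.degree = (n : WithBot ℕ) := by
      rw [hf, Polynomial.degree_prod]
      simp [Polynomial.degree_X_sub_C]
    rw [hd]
    simp only [Finset.card_univ, Fintype.card_fin]
    exact_mod_cast Nat.lt_succ_self n
  have hinterp := Lagrange.eq_interpolate (v := u) hu.injOn hdeg
  have hco := congrArg (fun q => Polynomial.coeff q (n - p)) hinterp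
  have hlhs : f.coeff (n - p) = (-1) ^ p * Esig Finset.univ z p := by
    have := coeff_prod_X_sub_C (Finset.univ : Finset (Fin n)) z
      (by simpa using hp)
    simpa [hf, Finset.card_univ] using this
  have hbasis : ∀ ℓ : Fin (n + 1),
      (Lagrange.basis Finset.univ u ℓ).coeff (n - p)
        = (∏ i ∈ Finset.univ.erase ℓ, (u ℓ - u i))⁻¹ * ((-1) ^ p * Esig (Finset.univ.erase ℓ) u p) := by
    intro ℓ
    have hb : Lagrange.basis Finset.univ u ℓ
        = C (∏ j ∈ Finset.univ.erase ℓ, (u ℓ - u j)⁻¹)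
            * ∏ j ∈ Finset.univ.erase ℓ, (X - C (u j)) := by
      unfold Lagrange.basis Lagrange.basisDivisor
      rw [Finset.prod_mul_distrib, map_prod]
    have hcard : (Finset.univ.erase ℓ).card = n := by
      simp
    have hco2 := coeff_prod_X_sub_C (Finset.univ.erase ℓ) u (p := p) (by rw [hcard]; exact hp)
    rw [hcard] at hco2
    rw [hb, Polynomial.coeff_C_mul, ← Finset.prod_inv_distrib, hco2]
  rw [Lagrange.interpolate_apply] at hco
  rw [Polynomial.finset_sum_coeff] at hco
  simp only [Polynomial.coeff_C_mul, hbasis] at hco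
  have heval : ∀ ℓ : Fin (n + 1), f.eval (u ℓ) = ∏ m, (u ℓ - z m) := by
    intro ℓ
    rw [hf]
    simp [Polynomial.eval_prod]
  rw [hlhs] at hco
  have hne : ((-1 : ℂ)) ^ p ≠ 0 := pow_ne_zero _ (by norm_num)
  apply mul_left_cancel₀ hne
  rw [hco]
  rw [Finset.mul_sum]
  refine Finset.sum_congr rfl fun ℓ _ => ?_
  rw [heval ℓ, div_eq_mul_inv]
  ring

noncomputable def updEmb {n : ℕ} (j : Fin n) : Fin n ↪ Fin (n + 1) :=
  ⟨fun i => if i = j then Fin.last n else i.castSucc, by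
    intro a b hab
    dsimp only at hab
    by_cases ha : a = j <;> by_cases hb : b = j
    · rw [ha, hb]
    · rw [if_pos ha, if_neg hb] at hab
      exact absurd hab.symm (Fin.castSucc_lt_last b).ne
    · rw [if_neg ha, if_pos hb] at hab
      exact absurd hab (Fin.castSucc_lt_last a).ne
    · rw [if_neg ha, if_neg hb] at hab
      exact Fin.castSucc_injective _ hab⟩

lemma updEmb_apply {n : ℕ} (j i : Fin n) :
    updEmb j i = if i = j then Fin.last n else i.castSucc := rfl

lemma map_updEmb_univ {n : ℕ} (j : Fin n) :
    Finset.univ.map (updEmb j) = Finset.univ.erase j.castSucc := by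
  ext x
  simp only [Finset.mem_map, Finset.mem_erase, Finset.mem_univ, and_true, true_and]
  constructor
  · rintro ⟨i, -, rfl⟩
    by_cases hi : i = j
    · simp only [updEmb_apply, if_pos hi]
      exact (Fin.castSucc_lt_last j).ne'
    · simp only [updEmb_apply, if_neg hi]
      exact fun h => hi (Fin.castSucc_injective _ h)
  · intro hx
    rcases Fin.eq_castSucc_or_eq_last x with ⟨i, rfl⟩ | rfl
    · have hij : i ≠ j := fun h => hx (by rw [h])
      exact ⟨i, by simp [updEmb_apply, hij]⟩
    · exact ⟨j, by simp [updEmb_apply]⟩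

lemma update_eq_snoc_comp {n : ℕ} (v : Fin n → ℂ) (j : Fin n) (t : ℂ) :
    Function.update v j t = (Fin.snoc v t : Fin (n + 1) → ℂ) ∘ (updEmb j) := by
  funext i
  by_cases h : i = j
  · subst h
    simp [updEmb_apply, Function.update_self, Fin.snoc_last]
  · simp [updEmb_apply, Function.update_of_ne h, h, Fin.snoc_castSucc]

lemma esym_update_eq {n : ℕ} (v : Fin n → ℂ) (j : Fin n) (t : ℂ) (p : ℕ) :
    esym (Function.update v j t) p
      = Esig (Finset.univ.erase j.castSucc) (Fin.snoc v t) p := by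
  rw [update_eq_snoc_comp, esym_eq_Esig, ← map_updEmb_univ j, Esig_map]

lemma esym_update_affine {n : ℕ} (v : Fin n → ℂ) (j : Fin n) (p : ℕ) :
    ∃ A B : ℂ, ∀ t : ℂ, esym (Function.update v j t) p = A + t * B := by
  classical
  refine ⟨∑ T ∈ (Finset.powersetCard p (Finset.univ : Finset (Fin n))).filter (fun T => j ∉ T),
      ∏ i ∈ T, v i,
    ∑ T ∈ (Finset.powersetCard p (Finset.univ : Finset (Fin n))).filter (fun T => j ∈ T),
      ∏ i ∈ T.erase j, v i, ?_⟩
  intro t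
  unfold esym
  rw [← Finset.sum_filter_add_sum_filter_not (Finset.powersetCard p Finset.univ)
    (fun T => j ∉ T)]
  congr 1
  · refine Finset.sum_congr rfl fun T hT => Finset.prod_congr rfl fun i hi => ?_
    have hj : j ∉ T := (Finset.mem_filter.mp hT).2
    have : i ≠ j := fun h => hj (h ▸ hi)
    rw [Function.update_of_ne this]
  · rw [Finset.mul_sum]
    have hset : (Finset.powersetCard p (Finset.univ : Finset (Fin n))).filter
          (fun T => ¬ j ∉ T)
        = (Finset.powersetCard p (Finset.univ : Finset (Fin n))).filter (fun T => j ∈ T) := by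
      ext T
      simp
    rw [hset]
    refine Finset.sum_congr rfl fun T hT => ?_
    have hj : j ∈ T := (Finset.mem_filter.mp hT).2
    rw [← Finset.mul_prod_erase T _ hj, Function.update_self]
    congr 1
    refine Finset.prod_congr rfl fun i hi => ?_
    rw [Function.update_of_ne (Finset.ne_of_mem_erase hi)]

lemma Y_congr_esym {n : ℕ} (a : Fin (n + 1) → ℂ) (w1 w2 : Fin n → ℂ)
    (h : ∀ p : ℕ, esym w1 p = esym w2 p) : Y a w1 = Y a w2 := by
  unfold Y
  exact Finset.sum_congr rfl fun p _ => by rw [h]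

lemma Y_update_identity {n : ℕ} (a : Fin (n + 1) → ℂ) (v : Fin n → ℂ) (j : Fin n) (x y : ℂ) :
    (x - v j) * Y a (Function.update v j y)
      = (x - y) * Y a v + (y - v j) * Y a (Function.update v j x) := by
  unfold Y
  rw [Finset.mul_sum, Finset.mul_sum, Finset.mul_sum, ← Finset.sum_add_distrib]
  refine Finset.sum_congr rfl fun p _ => ?_
  obtain ⟨A, B, hAB⟩ := esym_update_affine v j (p : ℕ)
  have hv : esym v (p : ℕ) = A + v j * B := by
    rw [← hAB (v j), Function.update_eq_self]
  rw [hAB x, hAB y, hv]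
  ring

/-- with `(w_1, …, w_n) = (v_1, …, v_n)` and `w_{n+1}` generic, the last row
of `W · M` vanishes and the other rows are proportional to the rows of `Ω`. -/
theorem W_mul_M_with_w_eq_v (c : ℂ) (hc : c ≠ 0) (n : ℕ) (hn : 1 ≤ n)
    (u : Fin (n + 1) → ℂ) (hu : Function.Injective u)
    (v : Fin n → ℂ) (hv : Function.Injective v)
    (huv : ∀ (j : Fin (n + 1)) (i : Fin n), u j ≠ v i)
    (a : Fin (n + 1) → Fin (n + 1) → ℂ)
    (wlast : ℂ) (hwv : ∀ i : Fin n, wlast ≠ v i) (hwu : ∀ k : Fin (n + 1), wlast ≠ u k)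
    (w : Fin (n + 1) → ℂ) (hw : w = Fin.snoc v wlast)
    (W : Matrix (Fin (n + 1)) (Fin (n + 1)) ℂ)
    (hW : W = Matrix.of fun j ℓ =>
      g c (u ℓ) (w j) * (∏ i ∈ Finset.univ.erase ℓ, g c (u ℓ) (u i)) /
        (∏ m, g c (u ℓ) (w m))) :
    (∀ k : Fin (n + 1), (W * Mmat c u v a) (Fin.last n) k = 0) ∧
      (∀ (j : Fin n) (k : Fin (n + 1)),
        (W * Mmat c u v a) j.castSucc k =
          (∏ i ∈ Finset.univ.erase k, g c (u k) (u i)) * Om c u v a j k /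
            g c wlast (v j)) := by
  classical
  have hU : ∀ ℓ : Fin (n + 1), (∏ i ∈ Finset.univ.erase ℓ, (u ℓ - u i)) ≠ 0 := by
    intro ℓ
    refine Finset.prod_ne_zero_iff.mpr fun i hi => sub_ne_zero.mpr fun he => ?_
    exact (Finset.ne_of_mem_erase hi) (hu he.symm)
  have hUV : ∀ (k : Fin (n + 1)) (i : Fin n), u k - v i ≠ 0 :=
    fun k i => sub_ne_zero.mpr (huv k i)
  have hUwlast : ∀ k, u k - wlast ≠ 0 := fun k => sub_ne_zero.mpr fun h => hwu k h.symm
  have hUW : ∀ (ℓ m : Fin (n + 1)), u ℓ - w m ≠ 0 := by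
    intro ℓ m
    rw [hw]
    rcases Fin.eq_castSucc_or_eq_last m with ⟨i, rfl⟩ | rfl
    · rw [Fin.snoc_castSucc]; exact hUV ℓ i
    · rw [Fin.snoc_last]; exact hUwlast ℓ
  have hV : ∀ k, (∏ i, (u k - v i)) ≠ 0 :=
    fun k => Finset.prod_ne_zero_iff.mpr fun i _ => hUV k i
  have hWA : ∀ (j ℓ : Fin (n + 1)), W j ℓ =
      (∏ m ∈ Finset.univ.erase j, (u ℓ - w m)) / (∏ i ∈ Finset.univ.erase ℓ, (u ℓ - u i)) := by
    intro j ℓ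
    rw [hW]
    simp only [Matrix.of_apply, g]
    rw [Finset.prod_div_distrib, Finset.prod_div_distrib, Finset.prod_const, Finset.prod_const,
      Finset.card_erase_of_mem (Finset.mem_univ ℓ), Finset.card_univ, Fintype.card_fin]
    simp only [Nat.add_sub_cancel]
    have hS : (∏ m, (u ℓ - w m)) = (u ℓ - w j) * ∏ m ∈ Finset.univ.erase j, (u ℓ - w m) :=
      (Finset.mul_prod_erase _ _ (Finset.mem_univ j)).symm
    rw [hS]
    have h1 : u ℓ - w j ≠ 0 := hUW ℓ j
    have h2 := hU ℓ
    have h3 : (∏ m ∈ Finset.univ.erase j, (u ℓ - w m)) ≠ 0 :=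
      Finset.prod_ne_zero_iff.mpr fun m _ => hUW ℓ m
    field_simp
    ring
  have hKeyP : ∀ (j : Fin (n + 1)) (p : ℕ), p ≤ n →
      (∑ ℓ : Fin (n + 1), W j ℓ * esym (u ∘ ℓ.succAbove) p) = esym (w ∘ j.succAbove) p := by
    intro j p hp
    have hz : ∀ ℓ : Fin (n + 1), (∏ m : Fin n, (u ℓ - (w ∘ j.succAbove) m))
        = ∏ m ∈ Finset.univ.erase j, (u ℓ - w m) := by
      intro ℓ
      rw [← map_succAboveEmb_univ j, Finset.prod_map]
      rfl
    calc (∑ ℓ : Fin (n + 1), W j ℓ * esym (u ∘ ℓ.succAbove) p)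
        = ∑ ℓ : Fin (n + 1), (∏ m : Fin n, (u ℓ - (w ∘ j.succAbove) m)) /
            (∏ i ∈ Finset.univ.erase ℓ, (u ℓ - u i)) * Esig (Finset.univ.erase ℓ) u p := by
          refine Finset.sum_congr rfl fun ℓ _ => ?_
          rw [esym_comp_succAbove, hWA, hz ℓ]
      _ = Esig Finset.univ (w ∘ j.succAbove) p := master u hu _ hp
      _ = esym (w ∘ j.succAbove) p := (esym_eq_Esig _ _).symm
  have hKey : ∀ (j k : Fin (n + 1)),
      (∑ ℓ : Fin (n + 1), W j ℓ * Y (fun p => a p k) (u ∘ ℓ.succAbove))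
        = Y (fun p => a p k) (w ∘ j.succAbove) := by
    intro j k
    unfold Y
    simp only [Finset.mul_sum]
    rw [Finset.sum_comm]
    refine Finset.sum_congr rfl fun p _ => ?_
    rw [← hKeyP j (p : ℕ) (Nat.lt_succ_iff.mp p.isLt), Finset.mul_sum]
    refine Finset.sum_congr rfl fun ℓ _ => ?_
    ring
  have hWM : ∀ (j k : Fin (n + 1)), (W * Mmat c u v a) j k =
      (∏ i ∈ Finset.univ.erase k, g c (u k) (u i)) * Y (fun p => a p k) (w ∘ j.succAbove)
        - W j k * ((∏ i, g c (u k) (v i)) * Y (fun p => a p k) v) := by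
    intro j k
    rw [Matrix.mul_apply]
    simp only [Mmat, Matrix.of_apply]
    rw [Finset.sum_congr rfl fun ℓ _ => mul_sub (W j ℓ) _ _, Finset.sum_sub_distrib]
    congr 1
    · rw [← hKey j k, Finset.mul_sum]
      exact Finset.sum_congr rfl fun ℓ _ => by ring
    · rw [Finset.sum_eq_single k]
      · simp
      · intro ℓ _ hℓ
        simp [hℓ]
      · intro h
        exact absurd (Finset.mem_univ k) h
  have hPg : ∀ k : Fin (n + 1), (∏ i ∈ Finset.univ.erase k, g c (u k) (u i))
      = c ^ n / (∏ i ∈ Finset.univ.erase k, (u k - u i)) := by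
    intro k
    simp only [g]
    rw [Finset.prod_div_distrib, Finset.prod_const,
      Finset.card_erase_of_mem (Finset.mem_univ k), Finset.card_univ, Fintype.card_fin]
    simp only [Nat.add_sub_cancel]
  have hQg : ∀ k : Fin (n + 1), (∏ i, g c (u k) (v i))
      = c ^ n / (∏ i, (u k - v i)) := by
    intro k
    simp only [g]
    rw [Finset.prod_div_distrib, Finset.prod_const, Finset.card_univ, Fintype.card_fin]
  have hwlast_comp : (w ∘ (Fin.last n).succAbove) = v := by
    funext i
    simp [Fin.succAbove_last, hw, Fin.snoc_castSucc]
  have herase_last : ∀ x : ℂ,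
      (∏ m ∈ Finset.univ.erase (Fin.last n), (x - w m)) = ∏ i, (x - v i) := by
    intro x
    rw [← map_succAboveEmb_univ (Fin.last n), Finset.prod_map]
    refine Finset.prod_congr rfl fun i _ => ?_
    simp [Fin.succAbove_last, hw, Fin.snoc_castSucc]
  have herase_cast : ∀ (j : Fin n) (x : ℂ),
      (∏ m ∈ Finset.univ.erase (Fin.castSucc j), (x - w m))
        = (x - wlast) * ∏ i ∈ Finset.univ.erase j, (x - v i) := by
    intro j x
    rw [← map_updEmb_univ j, Finset.prod_map]
    have hcomp : ∀ i : Fin n, w ((updEmb j) i) = Function.update v j wlast i := by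
      intro i
      rw [hw, update_eq_snoc_comp]
      rfl
    calc (∏ i : Fin n, (x - w ((updEmb j) i)))
        = ∏ i : Fin n, (x - Function.update v j wlast i) :=
          Finset.prod_congr rfl fun i _ => by rw [hcomp i]
      _ = (x - Function.update v j wlast j)
            * ∏ i ∈ Finset.univ.erase j, (x - Function.update v j wlast i) :=
          (Finset.mul_prod_erase _ _ (Finset.mem_univ j)).symm
      _ = (x - wlast) * ∏ i ∈ Finset.univ.erase j, (x - v i) := by
          rw [Function.update_self]
          congr 1
          exact Finset.prod_congr rfl fun i hi => by
            rw [Function.update_of_ne (Finset.ne_of_mem_erase hi)]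
  have hYc : ∀ (j : Fin n) (k : Fin (n + 1)),
      Y (fun p => a p k) (w ∘ (Fin.castSucc j).succAbove)
        = Y (fun p => a p k) (Function.update v j wlast) := by
    intro j k
    refine Y_congr_esym _ _ _ fun p => ?_
    rw [esym_comp_succAbove, esym_update_eq, hw]
  constructor
  · intro k
    rw [hWM (Fin.last n) k, hwlast_comp, hWA, herase_last, hPg, hQg]
    have h1 := hU k
    have h2 := hV k
    field_simp
    ring
  · intro j k
    rw [hWM (Fin.castSucc j) k, hYc j k, hWA, herase_cast j (u k), hPg, hQg]
    simp only [Om, Matrix.of_apply, g]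
    have hVsplit : (u k - v j) * (∏ i ∈ Finset.univ.erase j, (u k - v i))
        = ∏ i, (u k - v i) :=
      Finset.mul_prod_erase Finset.univ (fun i => u k - v i) (Finset.mem_univ j)
    have hDk := hU k
    have hVe : (∏ i ∈ Finset.univ.erase j, (u k - v i)) ≠ 0 :=
      Finset.prod_ne_zero_iff.mpr fun i _ => hUV k i
    have hvj := hUV k j
    have hwl := hUwlast k
    have hwvj : wlast - v j ≠ 0 := sub_ne_zero.mpr (hwv j)
    have hid := Y_update_identity (fun p => a p k) v j (u k) wlast
    rw [← hVsplit]
    field_simp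
    set Dk := (∏ i ∈ Finset.univ.erase k, (u k - u i)) with hDkdef
    set Ve := (∏ i ∈ Finset.univ.erase j, (u k - v i)) with hVedef
    set Y1 := Y (fun p => a p k) (Function.update v j wlast) with hY1
    set Y2 := Y (fun p => a p k) v with hY2
    set Y3 := Y (fun p => a p k) (Function.update v j (u k)) with hY3
    linear_combination hid
end

section
/- Let S ≥ 1, let v_1,…,v_S ∈ ℂ be pairwise distinct, let u_1,…,u_{S+1} ∈ ℂ be pairwise distinct with u_μ ≠ v_ℓ for all μ,ℓ, and let w ∈ ℂ with w ≠ −v_ℓ for all ℓ. Then for all 1 ≤ j, k ≤ S+1: Σ_{ℓ=1}^{S} g(u_j,v_ℓ) · g(u_k,v_ℓ) · [ (∏_{i≠ℓ} g(v_i,v_ℓ)) / (∏_{μ=1}^{S+1} g(u_μ,v_ℓ)) ] · (w + u_j)/(w + v_ℓ) = −δ_{jk} · (∏_{ℓ=1}^{S} g(u_j,v_ℓ)) / (∏_{μ≠j} g(u_j,u_μ)) + (∏_{μ≠k} (w + u_μ)) / (∏_{ℓ=1}^{S} (w + v_ℓ)). -/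
open Finset Polynomial

lemma scalar_lagrange {ι : Type*} [Fintype ι] [DecidableEq ι]
    (t : ι → ℂ) (ht : Function.Injective t) (Q : ℂ[X])
    (hdeg : Q.degree < (Finset.univ : Finset ι).card) (z : ℂ) :
    ∑ i : ι, Q.eval (t i) * ∏ p ∈ Finset.univ.erase i, ((t i - t p)⁻¹ * (z - t p))
      = Q.eval z := by
  have h := Lagrange.eq_interpolate (v := t) (s := Finset.univ)
    (ht.injOn) (f := Q) (by simpa using hdeg)
  conv_rhs => rw [h]
  rw [Lagrange.interpolate_apply]
  rw [Polynomial.eval_finset_sum]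
  refine Finset.sum_congr rfl fun i _ => ?_
  rw [eval_mul, eval_C, Lagrange.basis, Polynomial.eval_prod]
  congr 1
  refine Finset.prod_congr rfl fun p _ => ?_
  simp [Lagrange.basisDivisor]

lemma erase_none_univ {n : ℕ} :
    (Finset.univ.erase none : Finset (Option (Fin n))) = Finset.univ.map Function.Embedding.some := by
  ext o; cases o <;> simp

lemma erase_some_univ {n : ℕ} (b : Fin n) :
    (Finset.univ.erase (some b) : Finset (Option (Fin n))) = insertNone (Finset.univ.erase b) := by
  ext o; cases o <;> simp [eq_comm]

lemma prod_erase_none {n : ℕ} (f : Option (Fin n) → ℂ) :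
    ∏ o ∈ Finset.univ.erase none, f o = ∏ a, f (some a) := by
  rw [erase_none_univ, Finset.prod_map]; rfl

lemma prod_erase_some {n : ℕ} (f : Option (Fin n) → ℂ) (b : Fin n) :
    ∏ o ∈ Finset.univ.erase (some b), f o = f none * ∏ a ∈ Finset.univ.erase b, f (some a) := by
  rw [erase_some_univ, Finset.prod_insertNone]

lemma prod_neg' {ι : Type*} (s : Finset ι) (f : ι → ℂ) :
    ∏ i ∈ s, (-f i) = (-1 : ℂ) ^ s.card * ∏ i ∈ s, f i := by
  rw [← prod_const, ← prod_mul_distrib]; simp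

lemma alg1 (c a1 a2 Dv Qv Pe wv wu : ℂ) (hc : c ≠ 0) (ha1 : a1 ≠ 0) (ha2 : a2 ≠ 0)
    (hDv : Dv ≠ 0) (hPe : Pe ≠ 0) (hwv : wv ≠ 0) (S' : ℕ) :
    c / a1 * (c / a2) * (c ^ S' / Dv / (c ^ (S' + 2) / (a2 * Qv))) * (wu / wv)
      = Qv * (-a1⁻¹ * -wu * (Dv⁻¹ * Pe)) / (wv * Pe) := by
  have hcS : c ^ S' ≠ 0 := pow_ne_zero _ hc
  have h1 : c ^ S' / Dv / (c ^ (S' + 2) / (a2 * Qv)) = a2 * Qv / (c ^ 2 * Dv) := by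
    rw [div_div_div_comm, pow_add, div_mul_cancel_left₀ hcS]
    field_simp
  rw [h1]
  field_simp
lemma alg2 (d B A P Qw cS : ℂ) (hA : A ≠ 0) (hB : B ≠ 0) (hP : P ≠ 0) (hcS : cS ≠ 0) :
    (Qw - d * B * A⁻¹ * P) / P = -d * (cS / A / (cS / B)) + Qw / P := by
  have h1 : cS / A / (cS / B) = B / A := by
    rw [div_div_div_comm, div_self hcS]
    field_simp
  rw [h1]
  field_simp
  ring


/-- the second partial-fraction summation identity of the appendix. -/
theorem partial_fraction_sum_two (c : ℂ) (hc : c ≠ 0) (S : ℕ) (hS : 1 ≤ S)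
    (v : Fin S → ℂ) (hv : Function.Injective v)
    (u : Fin (S + 1) → ℂ) (hu : Function.Injective u)
    (huv : ∀ (μ : Fin (S + 1)) (ℓ : Fin S), u μ ≠ v ℓ)
    (w : ℂ) (hw : ∀ ℓ : Fin S, w ≠ -v ℓ) (j k : Fin (S + 1)) :
    ∑ ℓ : Fin S,
        g c (u j) (v ℓ) * g c (u k) (v ℓ) *
          ((∏ i ∈ Finset.univ.erase ℓ, g c (v i) (v ℓ)) / (∏ μ, g c (u μ) (v ℓ))) *
          ((w + u j) / (w + v ℓ))
      = -(if j = k then 1 else 0) *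
            ((∏ ℓ, g c (u j) (v ℓ)) / (∏ μ ∈ Finset.univ.erase j, g c (u j) (u μ)))
          + (∏ μ ∈ Finset.univ.erase k, (w + u μ)) / (∏ ℓ, (w + v ℓ)) := by
  obtain ⟨S', rfl⟩ : ∃ S', S = S' + 1 := ⟨S - 1, by omega⟩
  -- node map
  set t : Option (Fin (S' + 1)) → ℂ := fun o => o.elim (u j) v with ht_def
  have ht : Function.Injective t := by
    rintro (_ | a) (_ | b) h <;> simp only [ht_def, Option.elim] at h
    · rfl
    · exact absurd h (huv j b)
    · exact absurd h.symm (huv j a)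
    · exact congrArg some (hv h)
  -- polynomial
  set Q : ℂ[X] := ∏ μ ∈ Finset.univ.erase k, (C (u μ) - X) with hQ_def
  have hQdeg : Q.degree < ((Finset.univ : Finset (Option (Fin (S' + 1)))).card : ℕ) := by
    rw [hQ_def, Polynomial.degree_prod]
    have : ∀ μ ∈ Finset.univ.erase k, (C (u μ) - X : ℂ[X]).degree = 1 := by
      intro μ _
      rw [show (C (u μ) - X : ℂ[X]) = -(X - C (u μ)) by ring, degree_neg, degree_X_sub_C]
    rw [Finset.sum_congr rfl this, Finset.sum_const, card_erase_of_mem (mem_univ k)]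
    simp only [Finset.card_univ, Fintype.card_fin, Fintype.card_option]
    norm_num
    have h2 : ((S' + 1 : ℕ) : WithBot ℕ) < ((S' + 1 + 1 : ℕ) : WithBot ℕ) := by
      exact_mod_cast by omega
    push_cast at h2
    exact h2
  have hQeval : ∀ x : ℂ, Q.eval x = ∏ μ ∈ Finset.univ.erase k, (u μ - x) := by
    intro x; rw [hQ_def, Polynomial.eval_prod]; simp
  -- the key scalar identity
  have key := scalar_lagrange t ht Q hQdeg (-w)
  rw [Fintype.sum_option] at key
  -- basic nonvanishing facts
  have hwv : ∀ ℓ : Fin (S' + 1), w + v ℓ ≠ 0 := fun ℓ h => hw ℓ (eq_neg_of_add_eq_zero_left h)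
  have huvne : ∀ (μ : Fin (S' + 1 + 1)) (ℓ : Fin (S' + 1)), u μ - v ℓ ≠ 0 :=
    fun μ ℓ => sub_ne_zero.mpr (huv μ ℓ)
  have hP : (∏ i, (w + v i)) ≠ 0 := Finset.prod_ne_zero_iff.mpr fun i _ => hwv i
  have hA : (∏ a, (u j - v a)) ≠ 0 := Finset.prod_ne_zero_iff.mpr fun a _ => huvne j a
  have hB : (∏ μ ∈ Finset.univ.erase j, (u j - u μ)) ≠ 0 :=
    Finset.prod_ne_zero_iff.mpr fun μ hμ =>
      sub_ne_zero.mpr fun h => (Finset.mem_erase.mp hμ).1 (hu h.symm)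
  -- rewrite key
  have ht0 : t none = u j := rfl
  have hts : ∀ a, t (some a) = v a := fun a => rfl
  rw [prod_erase_none (fun o => (t none - t o)⁻¹ * (-w - t o))] at key
  simp only [prod_erase_some, ht0, hts, hQeval] at key
  -- per-term identification
  have hterm : ∀ ℓ : Fin (S' + 1),
      g c (u j) (v ℓ) * g c (u k) (v ℓ) *
          ((∏ i ∈ Finset.univ.erase ℓ, g c (v i) (v ℓ)) / ∏ μ, g c (u μ) (v ℓ)) *
        ((w + u j) / (w + v ℓ))
      = ((∏ μ ∈ Finset.univ.erase k, (u μ - v ℓ)) *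
          ((v ℓ - u j)⁻¹ * (-w - u j) *
            ∏ a ∈ Finset.univ.erase ℓ, ((v ℓ - v a)⁻¹ * (-w - v a)))) /
          (∏ i, (w + v i)) := by
    intro ℓ
    have ha1 : u j - v ℓ ≠ 0 := huvne j ℓ
    have ha2 : u k - v ℓ ≠ 0 := huvne k ℓ
    have hDv : (∏ i ∈ Finset.univ.erase ℓ, (v i - v ℓ)) ≠ 0 :=
      Finset.prod_ne_zero_iff.mpr fun i hi =>
        sub_ne_zero.mpr fun h => (Finset.mem_erase.mp hi).1 (hv h)
    have hPe : (∏ a ∈ Finset.univ.erase ℓ, (w + v a)) ≠ 0 :=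
      Finset.prod_ne_zero_iff.mpr fun a _ => hwv a
    have e1 : ∏ i ∈ Finset.univ.erase ℓ, g c (v i) (v ℓ)
        = c ^ S' / ∏ i ∈ Finset.univ.erase ℓ, (v i - v ℓ) := by
      simp only [g]
      rw [Finset.prod_div_distrib, Finset.prod_const,
        Finset.card_erase_of_mem (Finset.mem_univ ℓ)]
      simp
    have e2 : ∏ μ, g c (u μ) (v ℓ) = c ^ (S' + 2) / ∏ μ, (u μ - v ℓ) := by
      simp only [g]
      rw [Finset.prod_div_distrib, Finset.prod_const]
      simp
    have e3 : ∏ a ∈ Finset.univ.erase ℓ, ((v ℓ - v a)⁻¹ * (-w - v a))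
        = (∏ a ∈ Finset.univ.erase ℓ, (v a - v ℓ))⁻¹ *
            ∏ a ∈ Finset.univ.erase ℓ, (w + v a) := by
      rw [← Finset.prod_inv_distrib, ← Finset.prod_mul_distrib]
      refine Finset.prod_congr rfl fun a _ => ?_
      rw [show v ℓ - v a = -(v a - v ℓ) by ring, inv_neg,
        show -w - v a = -(w + v a) by ring]
      ring
    have hDu : (∏ μ, (u μ - v ℓ))
        = (u k - v ℓ) * ∏ μ ∈ Finset.univ.erase k, (u μ - v ℓ) :=
      (Finset.mul_prod_erase _ _ (Finset.mem_univ k)).symm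
    have hPsplit : (∏ i, (w + v i))
        = (w + v ℓ) * ∏ i ∈ Finset.univ.erase ℓ, (w + v i) :=
      (Finset.mul_prod_erase _ _ (Finset.mem_univ ℓ)).symm
    rw [e1, e2, e3, hPsplit, hDu,
      show v ℓ - u j = -(u j - v ℓ) by ring, inv_neg,
      show -w - u j = -(w + u j) by ring]
    simp only [g]
    exact alg1 c _ _ _ _ _ _ _ hc ha1 ha2 hDv hPe (hwv ℓ) S'
  rw [Finset.sum_congr rfl fun ℓ _ => hterm ℓ, ← Finset.sum_div,
    eq_sub_of_add_eq' key]
  -- simplify the boundary pieces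
  have hQw : ∏ μ ∈ Finset.univ.erase k, (u μ - -w)
      = ∏ μ ∈ Finset.univ.erase k, (w + u μ) :=
    Finset.prod_congr rfl fun μ _ => by ring
  have hsq : ((-1 : ℂ)) ^ (S' + 1) * ((-1 : ℂ)) ^ (S' + 1) = 1 := by
    rw [← mul_pow]; norm_num
  have hEb : (∏ μ ∈ Finset.univ.erase k, (u μ - u j))
      = (-1 : ℂ) ^ (S' + 1) * ∏ μ ∈ Finset.univ.erase k, (u j - u μ) := by
    rw [show (∏ μ ∈ Finset.univ.erase k, (u μ - u j))
        = ∏ μ ∈ Finset.univ.erase k, -(u j - u μ) from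
        Finset.prod_congr rfl fun μ _ => by ring, prod_neg',
      Finset.card_erase_of_mem (Finset.mem_univ k)]
    simp
  have hEc : ∏ x, ((u j - v x)⁻¹ * (-w - v x))
      = (∏ x, (u j - v x))⁻¹ * ((-1 : ℂ) ^ (S' + 1) * ∏ x, (w + v x)) := by
    rw [Finset.prod_mul_distrib, Finset.prod_inv_distrib]
    congr 1
    rw [show (∏ x, (-w - v x)) = ∏ x, -(w + v x) from
      Finset.prod_congr rfl fun x _ => by ring, prod_neg']
    simp
  have hEnone : (∏ μ ∈ Finset.univ.erase k, (u μ - u j)) *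
        ∏ x, ((u j - v x)⁻¹ * (-w - v x))
      = (∏ μ ∈ Finset.univ.erase k, (u j - u μ)) * (∏ x, (u j - v x))⁻¹ *
          ∏ x, (w + v x) := by
    rw [hEb, hEc]
    calc ((-1 : ℂ) ^ (S' + 1) * ∏ μ ∈ Finset.univ.erase k, (u j - u μ)) *
          ((∏ x, (u j - v x))⁻¹ * ((-1 : ℂ) ^ (S' + 1) * ∏ x, (w + v x)))
        = ((-1 : ℂ) ^ (S' + 1) * (-1 : ℂ) ^ (S' + 1)) *
            ((∏ μ ∈ Finset.univ.erase k, (u j - u μ)) * (∏ x, (u j - v x))⁻¹ *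
              ∏ x, (w + v x)) := by ring
      _ = _ := by rw [hsq, one_mul]
  have hdelta : (if j = k then (1 : ℂ) else 0) *
        (∏ μ ∈ Finset.univ.erase j, (u j - u μ))
      = ∏ μ ∈ Finset.univ.erase k, (u j - u μ) := by
    by_cases hjk : j = k
    · subst hjk; simp
    · rw [if_neg hjk, zero_mul]
      exact (Finset.prod_eq_zero
        (Finset.mem_erase.mpr ⟨hjk, Finset.mem_univ j⟩) (sub_self (u j))).symm
  have eR1 : ∏ ℓ, g c (u j) (v ℓ) = c ^ (S' + 1) / ∏ ℓ, (u j - v ℓ) := by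
    simp only [g]
    rw [Finset.prod_div_distrib, Finset.prod_const]
    simp
  have eR2 : ∏ μ ∈ Finset.univ.erase j, g c (u j) (u μ)
      = c ^ (S' + 1) / ∏ μ ∈ Finset.univ.erase j, (u j - u μ) := by
    simp only [g]
    rw [Finset.prod_div_distrib, Finset.prod_const,
      Finset.card_erase_of_mem (Finset.mem_univ j)]
    simp
  rw [hQw, hEnone, eR1, eR2, ← hdelta]
  exact alg2 _ _ _ _ _ _ hA hB hP (pow_ne_zero _ hc)
end
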